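/- Let π : X → Y be a continuous surjection between compact metric spaces and suppose x_0 ∈ X satisfies card(π⁻¹({π(x_0)})) ≤ m. Then for every ε > 0 there exists η > 0 such that diam_{m+1}(π⁻¹(B_η(y))) < ε for every y ∈ B_η(π(x_0)). -/

import Mathlib

open Metric Set

/-- The minimal pairwise distance of an `m`-tuple. -/
noncomputable def Dm {X : Type*} [MetricSpace X] (m : ℕ) (x : Fin m → X) : ℝ :=
  sInf {r : ℝ | ∃ i j : Fin m, i ≠ j ∧ r = dist (x i) (x j)}

/-- The multivariate diameter of a set. -/
noncomputable def diamm {X : Type*} [MetricSpace X] (m : ℕ) (A : Set X) : ℝ :=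
  sSup {r : ℝ | ∃ a : Fin m → X, (∀ i, a i ∈ A) ∧ r = Dm m a}

theorem diamm_preimage_ball_small_near_mjectivity_point
    {X Y : Type*} [MetricSpace X] [CompactSpace X] [MetricSpace Y] [CompactSpace Y]
    (π : X → Y) (hπ : Continuous π) (hsurj : Function.Surjective π) (m : ℕ) (hm : 1 ≤ m)
    (x₀ : X) (hx₀ : Cardinal.mk (π ⁻¹' {π x₀}) ≤ m) :
    ∀ ε > 0, ∃ η > 0, ∀ y ∈ Metric.ball (π x₀) η,
      diamm (m + 1) (π ⁻¹' Metric.ball y η) < ε := by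
  intro ε hε
  by_contra hcon
  push_neg at hcon
  set C := Metric.diam (Set.univ : Set X) with hC
  have hbddT : ∀ a : Fin (m+1) → X,
      BddBelow {r : ℝ | ∃ i j : Fin (m+1), i ≠ j ∧ r = dist (a i) (a j)} := by
    intro a
    exact ⟨0, fun r ⟨i, j, _, hr⟩ => hr ▸ dist_nonneg⟩
  have hDm_le : ∀ (a : Fin (m+1) → X) (i j : Fin (m+1)), i ≠ j →
      Dm (m+1) a ≤ dist (a i) (a j) := by
    intro a i j hij
    exact csInf_le (hbddT a) ⟨i, j, hij, rfl⟩
  have h01 : (⟨0, by omega⟩ : Fin (m+1)) ≠ ⟨1, by omega⟩ := by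
    simp [Fin.ext_iff]
  have hDm_le_C : ∀ a : Fin (m+1) → X, Dm (m+1) a ≤ C := by
    intro a
    refine (hDm_le a _ _ h01).trans ?_
    exact Metric.dist_le_diam_of_mem isCompact_univ.isBounded trivial trivial
  have key : ∀ n : ℕ, ∃ y : Y, dist y (π x₀) < 1/(n+1) ∧
      ∃ a : Fin (m+1) → X, (∀ i, π (a i) ∈ Metric.ball y (1/(n+1))) ∧ ε/2 < Dm (m+1) a := by
    intro n
    have hpos : (0:ℝ) < 1/((n:ℝ)+1) := by positivity
    obtain ⟨y, hy, hd⟩ := hcon (1/(n+1)) hpos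
    set S := {r : ℝ | ∃ a : Fin (m+1) → X,
        (∀ i, a i ∈ π ⁻¹' Metric.ball y (1/(n+1))) ∧ r = Dm (m+1) a} with hS
    have hSbdd : BddAbove S := ⟨C, fun r ⟨a, _, hr⟩ => hr ▸ hDm_le_C a⟩
    have hd' : ε ≤ sSup S := by
      rw [diamm] at hd
      exact hd
    have hSne : S.Nonempty := by
      by_contra hne
      rw [Set.not_nonempty_iff_eq_empty] at hne
      rw [hne, Real.sSup_empty] at hd'
      linarith
    have hlt : ε/2 < sSup S := by linarith
    obtain ⟨r, ⟨a, haa, hr⟩, hr2⟩ := exists_lt_of_lt_csSup hSne hlt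
    exact ⟨y, mem_ball.mp hy, a, fun i => haa i, hr ▸ hr2⟩
  choose y hy a ha hDma using key
  obtain ⟨b, -, φ, hφ, hb⟩ := isCompact_univ.tendsto_subseq (x := a) (fun n => Set.mem_univ _)
  have hbi : ∀ i, Filter.Tendsto (fun n => a (φ n) i) Filter.atTop (nhds (b i)) := by
    intro i
    exact ((continuous_apply i).continuousAt.tendsto).comp hb
  have hbdist : ∀ i j : Fin (m+1), i ≠ j → ε/2 ≤ dist (b i) (b j) := by
    intro i j hij
    have hT : Filter.Tendsto (fun n => dist (a (φ n) i) (a (φ n) j)) Filter.atTop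
        (nhds (dist (b i) (b j))) := (hbi i).dist (hbi j)
    refine le_of_tendsto_of_tendsto' tendsto_const_nhds hT (fun n => ?_)
    exact le_of_lt (lt_of_lt_of_le (hDma (φ n)) (hDm_le _ i j hij))
  have hπb : ∀ i, π (b i) = π x₀ := by
    intro i
    have h1 : Filter.Tendsto (fun n => π (a (φ n) i)) Filter.atTop (nhds (π (b i))) :=
      (hπ.continuousAt.tendsto).comp (hbi i)
    have h2 : Filter.Tendsto (fun n => π (a (φ n) i)) Filter.atTop (nhds (π x₀)) := by
      rw [tendsto_iff_dist_tendsto_zero]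
      have hle : ∀ n : ℕ, dist (π (a (φ n) i)) (π x₀) ≤ 2/((n:ℝ)+1) := by
        intro n
        have h3 := ha (φ n) i
        rw [mem_ball] at h3
        have h4 := hy (φ n)
        have h5 : (1:ℝ)/((φ n : ℝ) + 1) ≤ 1/((n:ℝ)+1) := by
          apply one_div_le_one_div_of_le (by positivity)
          have h7 : n ≤ φ n := hφ.le_apply
          have h8 : (n:ℝ) ≤ (φ n : ℝ) := Nat.cast_le.mpr h7
          linarith
        calc dist (π (a (φ n) i)) (π x₀)
            ≤ dist (π (a (φ n) i)) (y (φ n)) + dist (y (φ n)) (π x₀) := dist_triangle _ _ _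
          _ ≤ 1/((φ n : ℝ) + 1) + 1/((φ n : ℝ) + 1) := by push_cast at h3 h4 ⊢; linarith
          _ ≤ 1/((n:ℝ)+1) + 1/((n:ℝ)+1) := by linarith
          _ = 2/((n:ℝ)+1) := by ring
      refine squeeze_zero (fun n => dist_nonneg) hle ?_
      have h6 := (tendsto_one_div_add_atTop_nhds_zero_nat : Filter.Tendsto (fun n : ℕ => 1 / ((n : ℝ) + 1)) Filter.atTop (nhds 0)).const_mul 2
      simpa [div_eq_mul_inv, mul_comm] using h6
    exact tendsto_nhds_unique h1 h2
  have hinj : Function.Injective (fun i : Fin (m+1) =>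
      (⟨b i, by simp [hπb i]⟩ : π ⁻¹' {π x₀})) := by
    intro i j hij
    by_contra hne
    have h1 : ε/2 ≤ dist (b i) (b j) := hbdist i j hne
    have h2 : b i = b j := congrArg Subtype.val hij
    rw [h2, dist_self] at h1
    linarith
  have hfin : Finite (π ⁻¹' {π x₀}) := by
    rw [← Cardinal.lt_aleph0_iff_finite]
    exact hx₀.trans_lt (Cardinal.nat_lt_aleph0 m)
  have hcard2 : Nat.card (π ⁻¹' {π x₀}) ≤ m := by
    have := Cardinal.toNat_le_toNat hx₀ (Cardinal.nat_lt_aleph0 m)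
    simpa [Nat.card] using this
  have hle : m + 1 ≤ Nat.card (π ⁻¹' {π x₀}) := by
    have h9 := Nat.card_le_card_of_injective _ hinj
    have h10 : Nat.card (Fin (m+1)) = m + 1 := by
      rw [Nat.card_eq_fintype_card, Fintype.card_fin]
    rw [h10] at h9
    exact h9
  omega
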